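/- For every pair of alternating bilinear forms A, B on a finite-dimensional complex vector space V there exists a bi-Lagrangian subspace: that is, there is a subspace L ⊆ V on which both A and B vanish identically and such that 2·(dim V − dim L) equals the rank r of the pencil {A + λ·B}. -/

import Mathlib

open Module


open Module LinearMap Polynomial
set_option linter.unusedSectionVars false

namespace BiLag
variable {V : Type*} [AddCommGroup V] [Module ℂ V] [FiniteDimensional ℂ V]

noncomputable abbrev rk (C : V →ₗ[ℂ] V →ₗ[ℂ] ℂ) : ℕ := finrank ℂ (LinearMap.range C)

noncomputable def res (W : Submodule ℂ V) (C : V →ₗ[ℂ] V →ₗ[ℂ] ℂ) : W →ₗ[ℂ] W →ₗ[ℂ] ℂ :=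
  C.compl₁₂ W.subtype W.subtype

@[simp] lemma res_apply (W : Submodule ℂ V) (C : V →ₗ[ℂ] V →ₗ[ℂ] ℂ) (x y : W) :
    res W C x y = C x y := rfl

lemma res_add (W : Submodule ℂ V) (C D : V →ₗ[ℂ] V →ₗ[ℂ] ℂ) :
    res W (C + D) = res W C + res W D := by ext x y; simp [res]

lemma res_smul (W : Submodule ℂ V) (c : ℂ) (C : V →ₗ[ℂ] V →ₗ[ℂ] ℂ) :
    res W (c • C) = c • res W C := by ext x y; simp [res]

lemma skew {C : V →ₗ[ℂ] V →ₗ[ℂ] ℂ} (hC : ∀ v, C v v = 0) (x y : V) : C x y = - C y x := by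
  have h := hC (x + y)
  simp only [map_add, LinearMap.add_apply, hC x, hC y] at h
  linear_combination h

lemma rk_add_ker (C : V →ₗ[ℂ] V →ₗ[ℂ] ℂ) :
    rk C + finrank ℂ (ker C) = finrank ℂ V := LinearMap.finrank_range_add_finrank_ker C

lemma mem_ker_res {W : Submodule ℂ V} {C : V →ₗ[ℂ] V →ₗ[ℂ] ℂ} (x : W) :
    x ∈ ker (res W C) ↔ ∀ y ∈ W, C x y = 0 := by
  simp only [LinearMap.mem_ker]
  constructor
  · intro h y hy
    have := congrArg (fun g => g ⟨y, hy⟩) h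
    simpa using this
  · intro h; ext y; simpa using h y y.2

lemma finrank_comap_subtype (W P : Submodule ℂ V) :
    finrank ℂ (P.comap W.subtype) = finrank ℂ ↥(W ⊓ P) := by
  rw [← Submodule.map_comap_subtype]
  exact (Submodule.finrank_map_subtype_eq W _).symm

/-- monotonicity: restriction does not increase rank -/
lemma rk_res_le (W : Submodule ℂ V) (C : V →ₗ[ℂ] V →ₗ[ℂ] ℂ) : rk (res W C) ≤ rk C := by
  have h1 : Submodule.comap W.subtype (ker C) ≤ ker (res W C) := by
    intro x hx
    rw [mem_ker_res]
    intro y hy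
    have : C (x : V) = 0 := hx
    simp [this]
  have h2 := Submodule.finrank_mono h1
  rw [finrank_comap_subtype] at h2
  have h3 := Submodule.finrank_sup_add_finrank_inf_eq W (ker C)
  have h4 : finrank ℂ ↥(W ⊔ ker C) ≤ finrank ℂ V := Submodule.finrank_le _
  have h5 := rk_add_ker C
  have h6 := rk_add_ker (res W C)
  have h7 : finrank ℂ W ≤ finrank ℂ V := Submodule.finrank_le _
  omega

/-- functional vanishing on `ker f` is a multiple of `f` -/
lemma mem_span_functional {f g : V →ₗ[ℂ] ℂ} (hf : f ≠ 0) (h : ker f ≤ ker g) :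
    g ∈ Submodule.span ℂ {f} := by
  obtain ⟨u, hu⟩ : ∃ u, f u ≠ 0 := by
    by_contra hc; push_neg at hc; exact hf (by ext z; simp [hc z])
  rw [Submodule.mem_span_singleton]
  refine ⟨g ((f u)⁻¹ • u), ?_⟩
  ext z
  have hz : z - ((f z) * (f u)⁻¹) • u ∈ ker f := by
    simp only [LinearMap.mem_ker, map_sub, map_smul, smul_eq_mul]
    field_simp
    ring
  have := h hz
  simp only [LinearMap.mem_ker, map_sub, map_smul, smul_eq_mul] at this
  simp only [LinearMap.smul_apply, map_smul, smul_eq_mul]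
  linear_combination -this

/-- rank of `f ≠ 0` hyperplane kernel -/
lemma finrank_ker_functional {f : V →ₗ[ℂ] ℂ} (hf : f ≠ 0) :
    finrank ℂ (ker f) + 1 = finrank ℂ V := by
  have h1 := LinearMap.finrank_range_add_finrank_ker f
  have h2 : LinearMap.range f = ⊤ := by
    obtain ⟨u, hu⟩ : ∃ u, f u ≠ 0 := by
      by_contra hc; push_neg at hc; exact hf (by ext z; simp [hc z])
    rw [eq_top_iff]
    intro z _
    exact ⟨(z * (f u)⁻¹) • u, by rw [map_smul, smul_eq_mul, mul_assoc, inv_mul_cancel₀ hu, mul_one]⟩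
  rw [h2] at h1
  simp only [finrank_top, finrank_self] at h1
  omega

/-- Case (i): restriction to a complement of a line in the radical preserves rank. -/
lemma rk_res_compl {C : V →ₗ[ℂ] V →ₗ[ℂ] ℂ} (hsk : ∀ x y, C x y = -C y x) {v : V}
    (hv : C v = 0) {W : Submodule ℂ V}
    (hsup : W ⊔ Submodule.span ℂ {v} = ⊤) (hvW : v ∉ W) :
    rk (res W C) = rk C := by
  have hvne : v ≠ 0 := fun h => hvW (h ▸ W.zero_mem)
  have hinf : W ⊓ Submodule.span ℂ {v} = ⊥ := by
    rw [eq_bot_iff]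
    rintro x ⟨hxW, hxs⟩
    obtain ⟨a, rfl⟩ := Submodule.mem_span_singleton.mp hxs
    rcases eq_or_ne a 0 with rfl | ha
    · simp
    · exact absurd (by simpa [ha] using W.smul_mem a⁻¹ hxW) hvW
  have hdimW : finrank ℂ W + 1 = finrank ℂ V := by
    have := Submodule.finrank_sup_add_finrank_inf_eq W (Submodule.span ℂ {v})
    rw [hsup, hinf, finrank_span_singleton hvne] at this
    simpa [finrank_top] using this.symm
  -- kernel of restriction
  have hker : ker (res W C) = Submodule.comap W.subtype (ker C) := by
    ext x
    rw [mem_ker_res]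
    constructor
    · intro h
      simp only [Submodule.mem_comap, LinearMap.mem_ker]
      ext z
      have hz : z ∈ W ⊔ Submodule.span ℂ {v} := by rw [hsup]; trivial
      obtain ⟨w, hw, s, hs, rfl⟩ := Submodule.mem_sup.mp hz
      obtain ⟨a, rfl⟩ := Submodule.mem_span_singleton.mp hs
      have hxv : C (x : V) v = 0 := by rw [hsk]; simp [hv]
      simp [h w hw, hxv]
    · intro h y hy
      have : C (x : V) = 0 := h
      simp [this]
  -- ker C = (W ⊓ ker C) ⊔ span v
  have hkerC : (W ⊓ ker C) ⊔ Submodule.span ℂ {v} = ker C := by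
    apply le_antisymm
    · refine sup_le inf_le_right ?_
      rw [Submodule.span_singleton_le_iff_mem]
      exact hv
    · intro k hk
      have hz : k ∈ W ⊔ Submodule.span ℂ {v} := by rw [hsup]; trivial
      obtain ⟨w, hw, s, hs, rfl⟩ := Submodule.mem_sup.mp hz
      have hsker : s ∈ ker C := by
        obtain ⟨a, rfl⟩ := Submodule.mem_span_singleton.mp hs
        exact Submodule.smul_mem _ a (LinearMap.mem_ker.mpr hv)
      have hwker : w ∈ ker C := by
        have : (w + s) - s ∈ ker C := Submodule.sub_mem _ hk hsker
        simpa using this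
      exact Submodule.add_mem _ (Submodule.mem_sup_left ⟨hw, hwker⟩)
        (Submodule.mem_sup_right hs)
  have hinf2 : (W ⊓ ker C) ⊓ Submodule.span ℂ {v} = ⊥ := by
    rw [eq_bot_iff]
    intro x hx
    exact hinf.le ⟨hx.1.1, hx.2⟩
  have hdimker : finrank ℂ ↥(W ⊓ ker C) + 1 = finrank ℂ (ker C) := by
    have := Submodule.finrank_sup_add_finrank_inf_eq (W ⊓ ker C) (Submodule.span ℂ {v})
    rw [hkerC, hinf2, finrank_span_singleton hvne] at this
    simpa using this.symm
  have h5 := rk_add_ker C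
  have h6 := rk_add_ker (res W C)
  rw [hker, finrank_comap_subtype] at h6
  omega

/-- Case (ii): exact rank drop by 2 on the hyperplane `ker f` when `C v = c • f`, `c ≠ 0`. -/
lemma rk_res_hyperplane_exact {C : V →ₗ[ℂ] V →ₗ[ℂ] ℂ} (hsk : ∀ x y, C x y = -C y x)
    {f : V →ₗ[ℂ] ℂ} (hf : f ≠ 0) {v : V} {c : ℂ} (hc : c ≠ 0)
    (hCv : C v = c • f) (hfv : f v = 0) :
    rk (res (ker f) C) + 2 = rk C := by
  set W := ker f with hW
  set P := Submodule.comap C (Submodule.span ℂ {f}) with hP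
  have hfx : ∀ x ∈ P, f x = 0 := by
    intro x hx
    obtain ⟨t, ht⟩ := Submodule.mem_span_singleton.mp (Submodule.mem_comap.mp hx)
    have h1 : c * f x = C v x := by rw [hCv]; simp
    have h2 : C x v = t * f v := by rw [← ht]; simp
    have h3 : C v x = - C x v := by rw [hsk x v]; ring
    have : c * f x = 0 := by rw [h1, h3, h2, hfv]; ring
    exact (mul_eq_zero.mp this).resolve_left hc
  have hPW : P ≤ W := fun x hx => LinearMap.mem_ker.mpr (hfx x hx)
  have hker : ker (res W C) = Submodule.comap W.subtype P := by
    ext x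
    rw [mem_ker_res]
    constructor
    · intro h
      simp only [Submodule.mem_comap, hP]
      exact mem_span_functional hf (fun z hz => LinearMap.mem_ker.mpr (h z hz))
    · intro h y hy
      obtain ⟨t, ht⟩ := Submodule.mem_span_singleton.mp (Submodule.mem_comap.mp h)
      have h2 := congrArg (fun g => g y) ht
      simp only [LinearMap.smul_apply, smul_eq_mul, Submodule.subtype_apply] at h2
      rw [← h2, LinearMap.mem_ker.mp hy, mul_zero]
  -- dimension of P
  have hdimP : finrank ℂ P = finrank ℂ (ker C) + 1 := by
    set g := C ∘ₗ P.subtype with hg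
    have hrn := LinearMap.finrank_range_add_finrank_ker g
    have hkerg : ker g = Submodule.comap P.subtype (ker C) := by
      ext x; simp [hg, LinearMap.mem_ker]
    have hkerCP : ker C ≤ P := by
      intro x hx
      simp only [hP, Submodule.mem_comap, LinearMap.mem_ker.mp hx]
      exact Submodule.zero_mem _
    have hdimkerg : finrank ℂ (ker g) = finrank ℂ (ker C) := by
      rw [hkerg, finrank_comap_subtype, inf_of_le_right hkerCP]
    have hrangeg : LinearMap.range g = Submodule.span ℂ {f} := by
      apply le_antisymm
      · rintro - ⟨x, rfl⟩
        exact Submodule.mem_comap.mp x.2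
      · rw [Submodule.span_singleton_le_iff_mem]
        have hvP : v ∈ P := by
          simp only [hP, Submodule.mem_comap, hCv]
          exact Submodule.smul_mem _ c (Submodule.mem_span_singleton_self f)
        refine ⟨c⁻¹ • ⟨v, hvP⟩, ?_⟩
        simp [hg, hCv, smul_smul, inv_mul_cancel₀ hc]
    have hdimrange : finrank ℂ (LinearMap.range g) = 1 := by
      rw [hrangeg]; exact finrank_span_singleton hf
    omega
  have h5 := rk_add_ker C
  have h6 := rk_add_ker (res W C)
  rw [hker, finrank_comap_subtype, inf_of_le_right hPW, hdimP] at h6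
  have h7 := finrank_ker_functional hf
  rw [← hW] at h7
  omega

/-- Case (iii): bound on the hyperplane `ker f` when `ker C ≤ ker f`. -/
lemma rk_res_hyperplane_le {C : V →ₗ[ℂ] V →ₗ[ℂ] ℂ} {f : V →ₗ[ℂ] ℂ} (hf : f ≠ 0)
    (h : ker C ≤ ker f) : rk (res (ker f) C) + 1 ≤ rk C := by
  set W := ker f with hW
  have h1 : Submodule.comap W.subtype (ker C) ≤ ker (res W C) := by
    intro x hx
    rw [mem_ker_res]
    intro y hy
    have : C (x : V) = 0 := hx
    simp [this]
  have h2 := Submodule.finrank_mono h1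
  rw [finrank_comap_subtype, inf_of_le_right (show ker C ≤ W from h)] at h2
  have h5 := rk_add_ker C
  have h6 := rk_add_ker (res W C)
  have h7 := finrank_ker_functional hf
  rw [← hW] at h7
  omega

universe u

/-- The rank of an alternating bilinear form is even. -/
lemma even_rk_aux : ∀ (n : ℕ) {V : Type u} [AddCommGroup V] [Module ℂ V]
    [FiniteDimensional ℂ V], finrank ℂ V ≤ n →
    ∀ (C : V →ₗ[ℂ] V →ₗ[ℂ] ℂ), (∀ v, C v v = 0) → Even (rk C) := by
  intro n
  induction n with
  | zero =>
    intro V _ _ _ hn C halt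
    have h := rk_add_ker C
    have : rk C = 0 := by omega
    simp [this]
  | succ n ih =>
    intro V _ _ _ hn C halt
    by_cases hC0 : C = 0
    · subst hC0; rw [show rk (0 : V →ₗ[ℂ] V →ₗ[ℂ] ℂ) = 0 by simp [rk]]; exact Even.zero
    obtain ⟨x, hx⟩ : ∃ x, C x ≠ 0 := by
      by_contra hc; push_neg at hc; exact hC0 (by ext z w; simp [hc z])
    obtain ⟨y, hy⟩ : ∃ y, C x y ≠ 0 := by
      by_contra hc; push_neg at hc; exact hx (by ext w; simp [hc w])
    have hsk := skew halt
    set c := C x y with hc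
    set Q := ker (C x) ⊓ ker (C y) with hQ
    -- every vector decomposes
    have htop : ∀ z : V, ∃ w ∈ Q, ∃ a b : ℂ, z = w + a • x + b • y := by
      intro z
      refine ⟨z - (-(C y z)/c) • x - ((C x z)/c) • y, ?_, -(C y z)/c, (C x z)/c, by abel⟩
      refine Submodule.mem_inf.mpr ⟨?_, ?_⟩
      · simp only [LinearMap.mem_ker, map_sub, map_smul, smul_eq_mul, halt x, ← hc]
        field_simp
        ring
      · simp only [LinearMap.mem_ker, map_sub, map_smul, smul_eq_mul, halt y]
        have : C y x = -c := by rw [hsk y x, hc]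
        rw [this]
        field_simp; try ring
    have hQx : ∀ z ∈ Q, C x z = 0 := fun z hz => LinearMap.mem_ker.mp hz.1
    have hQy : ∀ z ∈ Q, C y z = 0 := fun z hz => LinearMap.mem_ker.mp hz.2
    have hker : ker (res Q C) = Submodule.comap Q.subtype (ker C) := by
      ext z
      rw [mem_ker_res]
      constructor
      · intro h
        simp only [Submodule.mem_comap, LinearMap.mem_ker]
        ext u
        obtain ⟨w, hw, a, b, rfl⟩ := htop u
        have h1 : C (z : V) x = 0 := by rw [hsk]; simp [hQx _ z.2]
        have h2 : C (z : V) y = 0 := by rw [hsk]; simp [hQy _ z.2]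
        simp [map_add, map_smul, h1, h2, h w hw]
      · intro h u hu
        have : C (z : V) = 0 := h
        simp [this]
    have hkerCQ : ker C ≤ Q := by
      intro z hz
      have hz0 : C z = 0 := hz
      constructor
      · simp [LinearMap.mem_ker, hsk x z, hz0]
      · simp [LinearMap.mem_ker, hsk y z, hz0]
    -- dim Q + 2 = dim V
    have hdimQ : finrank ℂ Q + 2 = finrank ℂ V := by
      set φ := (C x).prod (C y) with hφ
      have hkerφ : ker φ = Q := LinearMap.ker_prod _ _
      have hsurj : LinearMap.range φ = ⊤ := by
        rw [LinearMap.range_eq_top]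
        intro p
        refine ⟨(-p.2/c) • x + (p.1/c) • y, ?_⟩
        have h1 : C y x = -c := by rw [hsk y x, hc]
        simp only [hφ, LinearMap.prod_apply, Function.prod, map_add, map_smul, smul_eq_mul,
          halt x, halt y, ← hc, h1]
        ext <;> simp only [Prod.fst_add, Prod.snd_add, Prod.smul_fst, Prod.smul_snd,
          smul_eq_mul] <;> field_simp <;> ring
      have hrn := LinearMap.finrank_range_add_finrank_ker φ
      rw [hkerφ, hsurj, finrank_top] at hrn
      have : finrank ℂ (ℂ × ℂ) = 2 := by
        simp [Module.finrank_prod]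
      omega
    have h5 := rk_add_ker C
    have h6 := rk_add_ker (res Q C)
    rw [hker, finrank_comap_subtype, inf_of_le_right hkerCQ] at h6
    have halt' : ∀ w : Q, res Q C w w = 0 := fun w => halt w
    have heven := ih (V := Q) (by omega) (res Q C) halt'
    have : rk C = rk (res Q C) + 2 := by omega
    rw [this]
    exact heven.add even_two

section Gram
variable {ι : Type*} [Fintype ι] [DecidableEq ι]

/-- Gram matrix of a bilinear form on a family of vectors. -/
noncomputable def gram (C : V →ₗ[ℂ] V →ₗ[ℂ] ℂ) (e : ι → V) : Matrix ι ι ℂ :=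
  Matrix.of fun i j => C (e i) (e j)

/-- If the Gram matrix on some family is nonsingular, the rank is at least the family size. -/
lemma card_le_rk_of_gram_det_ne_zero {C : V →ₗ[ℂ] V →ₗ[ℂ] ℂ} {e : ι → V}
    (h : (gram C e).det ≠ 0) : Fintype.card ι ≤ rk C := by
  set ψ : ι → (V →ₗ[ℂ] ℂ) := fun i => C (e i) with hψ
  have hli : LinearIndependent ℂ ψ := by
    rw [Fintype.linearIndependent_iff]
    intro g hg
    by_contra hgne
    push_neg at hgne
    obtain ⟨i, hi⟩ := hgne
    have : (∃ v ≠ 0, Matrix.vecMul v (gram C e) = 0) := by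
      refine ⟨g, fun hh => hi (by rw [hh]; rfl), ?_⟩
      ext j
      have := congrArg (fun F => F (e j)) hg
      simpa [Matrix.vecMul, dotProduct, gram, hψ] using this
    rw [Matrix.exists_vecMul_eq_zero_iff] at this
    exact h this
  have hmem : ∀ i, ψ i ∈ LinearMap.range C := fun i => ⟨e i, rfl⟩
  set ψ' : ι → LinearMap.range C := fun i => ⟨ψ i, hmem i⟩ with hψ'
  have hli' : LinearIndependent ℂ ψ' :=
    LinearIndependent.of_comp (LinearMap.range C).subtype (by exact hli)
  exact hli'.fintype_card_le_finrank

/-- If the Gram matrix on a basis is singular, the (skew) form has nontrivial kernel. -/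
lemma exists_ker_of_gram_det_eq_zero {C : V →ₗ[ℂ] V →ₗ[ℂ] ℂ}
    (hsk : ∀ x y, C x y = -C y x) (b : Basis ι ℂ V)
    (h : (gram C b).det = 0) : ∃ v : V, v ≠ 0 ∧ C v = 0 := by
  obtain ⟨z, hz, hzv⟩ := Matrix.exists_mulVec_eq_zero_iff.mpr h
  set s : V := ∑ j, z j • b j with hs
  have hsne : s ≠ 0 := by
    intro hc
    apply hz
    have := Fintype.linearIndependent_iff.mp b.linearIndependent z (by rw [← hs, hc])
    ext j; exact this j
  refine ⟨s, hsne, ?_⟩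
  have hright : ∀ x, C x s = 0 := by
    intro x
    have hb : ∀ i, C (b i) s = 0 := by
      intro i
      have := congrArg (fun w => w i) hzv
      simpa [Matrix.mulVec, dotProduct, gram, hs, map_sum, mul_comm] using this
    have hx : x ∈ Submodule.span ℂ (Set.range b) := by rw [b.span_eq]; trivial
    induction hx using Submodule.span_induction with
    | mem w hw => obtain ⟨i, rfl⟩ := hw; exact hb i
    | zero => simp
    | add u w _ _ hu hw => simp [map_add, hu, hw]
    | smul a u _ hu => simp [map_smul, hu]
  ext x
  rw [hsk s x, hright x]
  simp

/-- complement of the kernel: dimension and (right-)nondegeneracy -/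
lemma compl_ker_facts {C : V →ₗ[ℂ] V →ₗ[ℂ] ℂ} (hsk : ∀ x y, C x y = -C y x)
    {U : Submodule ℂ V} (hU : IsCompl (ker C) U) :
    finrank ℂ U = rk C ∧ ∀ s ∈ U, (∀ u ∈ U, C u s = 0) → s = 0 := by
  constructor
  · have h1 := Submodule.finrank_add_eq_of_isCompl hU
    have h2 := rk_add_ker C
    omega
  · intro s hsU hall
    have hz : ∀ z, C z s = 0 := by
      intro z
      have hz2 : z ∈ ker C ⊔ U := by rw [hU.codisjoint.eq_top]; trivial
      obtain ⟨k, hk, u, hu, rfl⟩ := Submodule.mem_sup.mp hz2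
      have hk0 : C k = 0 := hk
      simp [map_add, hk0, hall u hu]
    have : s ∈ ker C := by
      rw [LinearMap.mem_ker]
      ext z
      rw [hsk s z, hz z]
      simp
    have := hU.disjoint.le_bot ⟨this, hsU⟩
    simpa using this

end Gram

section Poly
variable {ι : Type*} [Fintype ι] [DecidableEq ι]

/-- From a singular polynomial matrix, find a kernel vector with a coordinate not divisible
by `X`. -/
lemma exists_mulVec_eval_ne_zero {M : Matrix ι ι (Polynomial ℂ)} (h : M.det = 0) :
    ∃ w : ι → Polynomial ℂ, M.mulVec w = 0 ∧ ∃ i, (w i).eval 0 ≠ 0 := by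
  obtain ⟨w, hwne, hwv⟩ := Matrix.exists_mulVec_eq_zero_iff.mpr h
  have main : ∀ (N : ℕ) (w : ι → Polynomial ℂ), (∑ i, (w i).natDegree) ≤ N → w ≠ 0 →
      M.mulVec w = 0 → ∃ w' : ι → Polynomial ℂ, M.mulVec w' = 0 ∧ ∃ i, (w' i).eval 0 ≠ 0 := by
    intro N
    induction N with
    | zero =>
      intro w hdeg hne hmv
      refine ⟨w, hmv, ?_⟩
      obtain ⟨i, hi⟩ := Function.ne_iff.mp hne
      refine ⟨i, ?_⟩
      have hdi : (w i).natDegree = 0 := by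
        have := Finset.sum_eq_zero_iff.mp (Nat.le_zero.mp hdeg) i (Finset.mem_univ i)
        exact this
      rw [← Polynomial.coeff_zero_eq_eval_zero]
      intro hc
      apply hi
      rw [Polynomial.eq_C_of_natDegree_eq_zero hdi, hc, map_zero]
      rfl
    | succ N ih =>
      intro w hdeg hne hmv
      by_cases hev : ∃ i, (w i).eval 0 ≠ 0
      · exact ⟨w, hmv, hev⟩
      push_neg at hev
      have hdvd : ∀ i, ∃ u, w i = Polynomial.X * u := by
        intro i
        have : Polynomial.X ∣ w i := Polynomial.X_dvd_iff.mpr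
          (by rw [Polynomial.coeff_zero_eq_eval_zero]; exact hev i)
        obtain ⟨u, hu⟩ := this
        exact ⟨u, hu⟩
      choose u hu using hdvd
      obtain ⟨i₀, hi₀⟩ := Function.ne_iff.mp hne
      have hui₀ : u i₀ ≠ 0 := by
        intro hc; apply hi₀; rw [hu i₀, hc, mul_zero]; rfl
      have hune : u ≠ 0 := fun hc => hui₀ (by rw [hc]; rfl)
      have hmvu : M.mulVec u = 0 := by
        funext i
        have h1 : (M.mulVec w) i = Polynomial.X * (M.mulVec u) i := by
          simp only [Matrix.mulVec, dotProduct]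
          rw [Finset.mul_sum]
          congr 1; ext j; rw [hu j]; ring
        have h2 : (M.mulVec w) i = 0 := by rw [hmv]; rfl
        have h3 := h1.symm.trans h2
        rcases mul_eq_zero.mp h3 with hX | hz
        · exact absurd hX Polynomial.X_ne_zero
        · simpa using hz
      apply ih u ?_ hune hmvu
      have hle : ∀ i, (u i).natDegree ≤ (w i).natDegree := by
        intro i
        rcases eq_or_ne (u i) 0 with h0 | h0
        · simp [h0]
        · rw [hu i, Polynomial.natDegree_mul Polynomial.X_ne_zero h0,
            Polynomial.natDegree_X]
          omega
      have hlt : (u i₀).natDegree < (w i₀).natDegree := by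
        rw [hu i₀, Polynomial.natDegree_mul Polynomial.X_ne_zero hui₀,
          Polynomial.natDegree_X]
        omega
      have := Finset.sum_lt_sum (fun i _ => hle i) ⟨i₀, Finset.mem_univ i₀, hlt⟩
      omega
  exact main _ w le_rfl hwne hwv

/-- polynomial Gram matrix of a pencil -/
noncomputable def pgram (F G : V →ₗ[ℂ] V →ₗ[ℂ] ℂ) (e : ι → V) : Matrix ι ι (Polynomial ℂ) :=
  Matrix.of fun i j => Polynomial.C (F (e i) (e j)) + Polynomial.X * Polynomial.C (G (e i) (e j))

lemma pgram_eval (F G : V →ₗ[ℂ] V →ₗ[ℂ] ℂ) (e : ι → V) (t : ℂ) :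
    (pgram F G e).map (Polynomial.evalRingHom t) = gram (F + t • G) e := by
  ext i j
  simp only [pgram, gram, Matrix.map_apply, Matrix.of_apply, Polynomial.coe_evalRingHom,
    Polynomial.eval_add, Polynomial.eval_mul, Polynomial.eval_C, Polynomial.eval_X,
    LinearMap.add_apply, LinearMap.smul_apply, smul_eq_mul]

lemma pgram_det_eval (F G : V →ₗ[ℂ] V →ₗ[ℂ] ℂ) (e : ι → V) (t : ℂ) :
    (pgram F G e).det.eval t = (gram (F + t • G) e).det := by
  have := RingHom.map_det (Polynomial.evalRingHom t) (pgram F G e)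
  rw [RingHom.mapMatrix_apply, pgram_eval] at this
  simpa using this

/-- a nonzero polynomial has a non-root -/
lemma exists_not_root {p : Polynomial ℂ} (hp : p ≠ 0) : ∃ t : ℂ, p.eval t ≠ 0 := by
  have h := Polynomial.finite_setOf_isRoot hp
  obtain ⟨t, ht⟩ := h.infinite_compl.nonempty
  exact ⟨t, ht⟩

end Poly

/-- **Key lemma**: the kernel of a regular member of the pencil is isotropic for the
whole pencil. -/
lemma key_lemma {F G : V →ₗ[ℂ] V →ₗ[ℂ] ℂ} (hFalt : ∀ v, F v v = 0) (hGalt : ∀ v, G v v = 0)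
    {r : ℕ} (hreg : rk F = r) (hmem : ∀ t : ℂ, rk (F + t • G) ≤ r)
    {x y : V} (hx : F x = 0) (hy : F y = 0) : G x y = 0 := by
  by_contra hG
  have hskF := skew hFalt
  have hskG := skew hGalt
  obtain ⟨U, hU⟩ := Submodule.exists_isCompl (ker F)
  obtain ⟨hdimU, hnd⟩ := compl_ker_facts hskF hU
  set m := finrank ℂ U with hm
  set bU := Module.finBasis ℂ U with hbU
  set e : Fin 2 ⊕ Fin m → V := Sum.elim ![x, y] (fun k => (bU k : V)) with he
  set M := pgram F G e with hM
  have hex : e (Sum.inl 0) = x := rfl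
  have hey : e (Sum.inl 1) = y := rfl
  have hFx : ∀ z, F x z = 0 := fun z => by rw [hx]; rfl
  have hFy : ∀ z, F y z = 0 := fun z => by rw [hy]; rfl
  have hFrow : ∀ (a : Fin 2) (j : Fin 2 ⊕ Fin m), F (e (Sum.inl a)) (e j) = 0 := by
    intro a j
    fin_cases a
    · exact hFx _
    · exact hFy _
  have hdet : M.det ≠ 0 := by
    intro hdet0
    obtain ⟨w, hwv, i₁, hi₁⟩ := exists_mulVec_eval_ne_zero hdet0
    set z : Fin 2 ⊕ Fin m → ℂ := fun i => (w i).eval 0 with hz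
    have hrow0 : ∀ i, (∑ j, F (e i) (e j) * z j) = 0 := by
      intro i
      have h2 : Polynomial.eval 0 ((M.mulVec w) i) = ∑ j, F (e i) (e j) * z j := by
        simp [Matrix.mulVec, dotProduct, hM, pgram, Polynomial.eval_finset_sum, hz]
      rw [hwv] at h2
      simpa using h2.symm
    have hrowG : ∀ a : Fin 2, (∑ j, G (e (Sum.inl a)) (e j) * z j) = 0 := by
      intro a
      have h1 : (M.mulVec w) (Sum.inl a) =
          Polynomial.X * ∑ j, Polynomial.C (G (e (Sum.inl a)) (e j)) * w j := by
        simp only [Matrix.mulVec, dotProduct, hM, pgram, Matrix.of_apply]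
        rw [Finset.mul_sum]
        congr 1
        funext j
        rw [hFrow a j]
        simp
        ring
      have h0 : (M.mulVec w) (Sum.inl a) = 0 := by rw [hwv]; rfl
      have h3 : (∑ j, Polynomial.C (G (e (Sum.inl a)) (e j)) * w j) = 0 := by
        rcases mul_eq_zero.mp (h1.symm.trans h0) with hX | hres
        · exact absurd hX Polynomial.X_ne_zero
        · exact hres
      have h4 := congrArg (Polynomial.eval 0) h3
      simpa [Polynomial.eval_finset_sum, hz] using h4
    -- the U-part of z vanishes
    have hUzero : ∀ k : Fin m, z (Sum.inr k) = 0 := by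
      set sU : U := ∑ k, z (Sum.inr k) • bU k with hsU
      have hcoe : (sU : V) = ∑ k, z (Sum.inr k) • (bU k : V) := by
        simp [hsU]
      have hbasis : ∀ k, F ((bU k : V)) (sU : V) = 0 := by
        intro k
        have hr := hrow0 (Sum.inr k)
        rw [Fintype.sum_sum_type] at hr
        have hl0 : (∑ a : Fin 2, F (e (Sum.inr k)) (e (Sum.inl a)) * z (Sum.inl a)) = 0 := by
          apply Finset.sum_eq_zero
          intro a _
          have : F (e (Sum.inr k)) (e (Sum.inl a)) = 0 := by
            rw [skew hFalt, hFrow a (Sum.inr k)]; ring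
          rw [this]; ring
        rw [hl0, zero_add] at hr
        rw [hcoe, map_sum]
        simp only [map_smul, smul_eq_mul]
        rw [← hr]
        apply Finset.sum_congr rfl
        intro j _
        show z (Sum.inr j) * F ((bU k : V)) ((bU j : V))
          = F ((bU k : V)) ((bU j : V)) * z (Sum.inr j)
        ring
      have hall : ∀ u ∈ U, F u (sU : V) = 0 := by
        intro u hu
        set ℓ : U →ₗ[ℂ] ℂ := (F.flip (sU : V)).comp U.subtype with hℓ
        have : ℓ = 0 := by
          apply Basis.ext bU
          intro k
          simp only [hℓ, LinearMap.comp_apply, LinearMap.flip_apply, Submodule.coe_subtype,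
            LinearMap.zero_apply]
          exact hbasis k
        have := congrArg (fun g => g ⟨u, hu⟩) this
        simpa [hℓ] using this
      have hsU0 : (sU : V) = 0 := hnd (sU : V) sU.2 hall
      have hsU0' : sU = 0 := Subtype.ext hsU0
      intro k
      have hli := Fintype.linearIndependent_iff.mp bU.linearIndependent
        (fun k => z (Sum.inr k)) (by rw [← hsU]; exact hsU0')
      exact hli k
    have hGxy : G x y ≠ 0 := hG
    have hz1 : z (Sum.inl 1) = 0 := by
      have hr := hrowG 0
      rw [Fintype.sum_sum_type] at hr
      have hinr : (∑ k : Fin m, G (e (Sum.inl 0)) (e (Sum.inr k)) * z (Sum.inr k)) = 0 := by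
        apply Finset.sum_eq_zero
        intro k _
        rw [hUzero k]; ring
      rw [hinr, add_zero, Fin.sum_univ_two, hex, hey] at hr
      rw [hGalt x, zero_mul, zero_add] at hr
      exact (mul_eq_zero.mp hr).resolve_left hGxy
    have hz0 : z (Sum.inl 0) = 0 := by
      have hr := hrowG 1
      rw [Fintype.sum_sum_type] at hr
      have hinr : (∑ k : Fin m, G (e (Sum.inl 1)) (e (Sum.inr k)) * z (Sum.inr k)) = 0 := by
        apply Finset.sum_eq_zero
        intro k _
        rw [hUzero k]; ring
      rw [hinr, add_zero, Fin.sum_univ_two, hex, hey] at hr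
      rw [hGalt y, zero_mul, add_zero] at hr
      have hGyx : G y x ≠ 0 := by
        rw [hskG y x]
        simpa using hGxy
      exact (mul_eq_zero.mp hr).resolve_left hGyx
    rcases i₁ with a | k
    · fin_cases a
      · exact hi₁ hz0
      · exact hi₁ hz1
    · exact hi₁ (hUzero k)
  obtain ⟨t₀, ht₀⟩ := exists_not_root hdet
  rw [pgram_det_eval] at ht₀
  have hcard := card_le_rk_of_gram_det_ne_zero ht₀
  have hm_eq : m = r := hdimU.trans hreg
  rw [Fintype.card_sum, Fintype.card_fin, Fintype.card_fin] at hcard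
  have := hmem t₀
  omega

lemma rk_eq_zero_iff {C : V →ₗ[ℂ] V →ₗ[ℂ] ℂ} (h : rk C = 0) : C = 0 := by
  have h2 : LinearMap.range C = ⊥ := Submodule.finrank_eq_zero.mp h
  rw [← LinearMap.range_eq_bot]; exact h2

lemma rk_smul {C : V →ₗ[ℂ] V →ₗ[ℂ] ℂ} {c : ℂ} (hc : c ≠ 0) : rk (c • C) = rk C := by
  have : LinearMap.range (c • C) = LinearMap.range C := by
    ext g
    simp only [LinearMap.mem_range]
    constructor
    · rintro ⟨x, rfl⟩; exact ⟨c • x, by simp [smul_smul]⟩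
    · rintro ⟨x, rfl⟩; exact ⟨c⁻¹ • x, by simp [smul_smul, hc]⟩
  rw [rk, this]

section Members
variable {ι : Type*} [Fintype ι] [DecidableEq ι]

/-- the Gram matrix of a skew form on a basis of a complement of its kernel is nonsingular -/
lemma gram_det_ne_zero_on_compl {C : V →ₗ[ℂ] V →ₗ[ℂ] ℂ} (hsk : ∀ x y, C x y = -C y x)
    {U : Submodule ℂ V} (hU : IsCompl (ker C) U) (b : Basis ι ℂ U) :
    (gram C (fun i => (b i : V))).det ≠ 0 := by
  intro h
  obtain ⟨z, hzne, hzv⟩ := Matrix.exists_mulVec_eq_zero_iff.mpr h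
  obtain ⟨-, hnd⟩ := compl_ker_facts hsk hU
  set sU : U := ∑ k, z k • b k with hsU
  have hcoe : (sU : V) = ∑ k, z k • (b k : V) := by simp [hsU]
  have hbasis : ∀ k, C ((b k : V)) (sU : V) = 0 := by
    intro k
    have := congrArg (fun q => q k) hzv
    simp only [Matrix.mulVec, dotProduct, gram, Matrix.of_apply, Pi.zero_apply] at this
    rw [hcoe, map_sum]
    simp only [map_smul, smul_eq_mul]
    rw [← this]
    exact Finset.sum_congr rfl (fun j _ => by ring)
  have hall : ∀ u ∈ U, C u (sU : V) = 0 := by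
    intro u hu
    set ℓ : U →ₗ[ℂ] ℂ := (C.flip (sU : V)).comp U.subtype with hℓ
    have : ℓ = 0 := by
      apply Basis.ext b
      intro k
      simp only [hℓ, LinearMap.comp_apply, LinearMap.flip_apply, Submodule.coe_subtype,
        LinearMap.zero_apply]
      exact hbasis k
    have := congrArg (fun g => g ⟨u, hu⟩) this
    simpa [hℓ] using this
  have hsU0 : sU = 0 := Subtype.ext (hnd (sU : V) sU.2 hall)
  apply hzne
  have hli := Fintype.linearIndependent_iff.mp b.linearIndependent z (by rw [← hsU]; exact hsU0)
  funext k
  exact hli k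

/-- Existence of a regular member of the finite part of the pencil. -/
lemma exists_regular (A B : V →ₗ[ℂ] V →ₗ[ℂ] ℂ) (hA : ∀ v, A v v = 0) (hB : ∀ v, B v v = 0)
    (r : ℕ) (hrB : rk B ≤ r) (hrA : ∀ l : ℂ, rk (A + l • B) ≤ r)
    (hrmax : r = rk B ∨ ∃ l : ℂ, r = rk (A + l • B)) :
    ∃ l : ℂ, rk (A + l • B) = r := by
  rcases hrmax with hmB | ⟨l, hl⟩
  swap
  · exact ⟨l, hl.symm⟩
  rcases Nat.eq_zero_or_pos r with hr0 | hrpos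
  · refine ⟨0, ?_⟩
    have := hrA 0
    omega
  obtain ⟨U, hU⟩ := Submodule.exists_isCompl (ker B)
  obtain ⟨hdimU, -⟩ := compl_ker_facts (skew hB) hU
  set bU := Module.finBasis ℂ U with hbU
  set e : Fin (finrank ℂ U) → V := fun k => (bU k : V) with he
  set p := (pgram B A e).det with hp
  have hp0 : p.eval 0 ≠ 0 := by
    rw [hp, pgram_det_eval]
    have hBz : B + (0 : ℂ) • A = B := by simp
    rw [hBz]
    exact gram_det_ne_zero_on_compl (skew hB) hU bU
  have hpne : p * Polynomial.X ≠ 0 := by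
    intro hc
    rcases mul_eq_zero.mp hc with h | h
    · apply hp0; rw [h]; simp
    · exact Polynomial.X_ne_zero h
  obtain ⟨t, ht⟩ := exists_not_root hpne
  rw [Polynomial.eval_mul, Polynomial.eval_X] at ht
  have hpt : p.eval t ≠ 0 := fun hc => ht (by rw [hc]; ring)
  have htne : t ≠ 0 := fun hc => ht (by rw [hc]; ring)
  rw [hp, pgram_det_eval] at hpt
  have hcard := card_le_rk_of_gram_det_ne_zero hpt
  rw [Fintype.card_fin] at hcard
  have hsm : B + t • A = t • (A + t⁻¹ • B) := by
    rw [smul_add, smul_smul, mul_inv_cancel₀ htne]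
    ext u w
    simp [add_comm]
  rw [hsm, rk_smul htne] at hcard
  refine ⟨t⁻¹, le_antisymm (hrA t⁻¹) ?_⟩
  rw [← hmB] at hdimU
  omega

/-- Existence of a regular member that moreover does not kill a given vector. -/
lemma exists_good_lambda (A B : V →ₗ[ℂ] V →ₗ[ℂ] ℂ) (hA : ∀ v, A v v = 0) (hB : ∀ v, B v v = 0)
    {r : ℕ} (hrA : ∀ l : ℂ, rk (A + l • B) ≤ r) {l₀ : ℂ} (hl₀ : rk (A + l₀ • B) = r)
    {v : V} (hv : A v ≠ 0 ∨ B v ≠ 0) :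
    ∃ l : ℂ, rk (A + l • B) = r ∧ (A + l • B) v ≠ 0 := by
  set F := A + l₀ • B with hF
  have hFalt : ∀ w, F w w = 0 := fun w => by simp [hF, hA w, hB w]
  obtain ⟨U, hU⟩ := Submodule.exists_isCompl (ker F)
  obtain ⟨hdimU, -⟩ := compl_ker_facts (skew hFalt) hU
  set bU := Module.finBasis ℂ U with hbU
  set e : Fin (finrank ℂ U) → V := fun k => (bU k : V) with he
  set p := (pgram F B e).det with hp
  have hp0 : p.eval 0 ≠ 0 := by
    rw [hp, pgram_det_eval]
    have : F + (0 : ℂ) • B = F := by simp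
    rw [this]
    exact gram_det_ne_zero_on_compl (skew hFalt) hU bU
  have hpne : p ≠ 0 := fun hc => hp0 (by rw [hc]; simp)
  have hmember : ∀ t : ℂ, F + t • B = A + (l₀ + t) • B := by
    intro t
    rw [hF, add_smul]
    abel
  have hreg : ∀ t : ℂ, p.eval t ≠ 0 → rk (A + (l₀ + t) • B) = r := by
    intro t ht
    rw [hp, pgram_det_eval] at ht
    have hcard := card_le_rk_of_gram_det_ne_zero ht
    rw [Fintype.card_fin] at hcard
    rw [hmember t] at hcard
    have := hrA (l₀ + t)
    omega
  rcases eq_or_ne (B v) 0 with hBv | hBv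
  · -- A v ≠ 0, any regular parameter works
    have hAv : A v ≠ 0 := hv.resolve_right (fun hc => hc hBv)
    obtain ⟨t, ht⟩ := exists_not_root hpne
    refine ⟨l₀ + t, hreg t ht, ?_⟩
    have : (A + (l₀ + t) • B) v = A v := by simp [hBv]
    rw [this]
    exact hAv
  · -- B v ≠ 0
    obtain ⟨u, hu⟩ : ∃ u, B v u ≠ 0 := by
      by_contra hc; push_neg at hc; exact hBv (by ext w; simp [hc w])
    set tbad : ℂ := -(A v u) / (B v u) - l₀ with htbad
    have hqne : p * (Polynomial.X - Polynomial.C tbad) ≠ 0 := by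
      apply mul_ne_zero hpne
      intro hc
      have := congrArg (Polynomial.eval (tbad + 1)) hc
      simp at this
    obtain ⟨t, ht⟩ := exists_not_root hqne
    rw [Polynomial.eval_mul, Polynomial.eval_sub, Polynomial.eval_X, Polynomial.eval_C] at ht
    have hpt : p.eval t ≠ 0 := fun hc => ht (by rw [hc]; ring)
    have httbad : t ≠ tbad := fun hc => ht (by rw [hc]; ring)
    refine ⟨l₀ + t, hreg t hpt, ?_⟩
    intro hc
    have := congrArg (fun g => g u) hc
    simp only [LinearMap.add_apply, LinearMap.smul_apply, smul_eq_mul,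
      LinearMap.zero_apply] at this
    apply httbad
    rw [htbad]
    field_simp
    linear_combination this

end Members

/-- Existence of a degenerate direction for the (closed) pencil. -/
lemma exists_degenerate (A B : V →ₗ[ℂ] V →ₗ[ℂ] ℂ) (hA : ∀ v, A v v = 0)
    (hB : ∀ v, B v v = 0) (hn : 0 < finrank ℂ V) :
    ∃ v : V, v ≠ 0 ∧ (B v = 0 ∨ ∃ l : ℂ, (A + l • B) v = 0) := by
  by_cases hkB : ∃ v : V, v ≠ 0 ∧ B v = 0
  · obtain ⟨v, h1, h2⟩ := hkB; exact ⟨v, h1, Or.inl h2⟩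
  push_neg at hkB
  set n := finrank ℂ V with hn'
  set bV := Module.finBasis ℂ V with hbV
  set e : Fin n → V := fun i => bV i with he
  have hdetB : (gram B e).det ≠ 0 := by
    intro h
    obtain ⟨v, hv1, hv2⟩ := exists_ker_of_gram_det_eq_zero (skew hB) bV h
    exact (hkB v hv1) hv2
  set p := (pgram A B e).det with hp
  by_cases hproot : ∃ l : ℂ, p.eval l = 0
  · obtain ⟨l, hl⟩ := hproot
    rw [hp, pgram_det_eval] at hl
    have halt : ∀ w, (A + l • B) w w = 0 := fun w => by simp [hA w, hB w]
    obtain ⟨v, hv1, hv2⟩ := exists_ker_of_gram_det_eq_zero (skew halt) bV hl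
    exact ⟨v, hv1, Or.inr ⟨l, hv2⟩⟩
  push_neg at hproot
  exfalso
  have hpne : p ≠ 0 := by
    intro hc; exact hproot 0 (by rw [hc]; simp)
  have hdeg : p.natDegree = 0 := by
    by_contra hd
    have hdp : 0 < p.degree := Polynomial.natDegree_pos_iff_degree_pos.mp (Nat.pos_of_ne_zero hd)
    obtain ⟨z, hz⟩ := Complex.exists_root hdp
    exact hproot z hz
  set c := p.coeff 0 with hc
  have hpC : p = Polynomial.C c := Polynomial.eq_C_of_natDegree_eq_zero hdeg
  set q := (pgram B A e).det with hq
  have hqeval : ∀ μ : ℂ, μ ≠ 0 → q.eval μ = μ ^ n * c := by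
    intro μ hμ
    rw [hq, pgram_det_eval]
    have hgram : gram (B + μ • A) e = μ • gram (A + μ⁻¹ • B) e := by
      ext i j
      simp only [gram, Matrix.of_apply, Matrix.smul_apply, LinearMap.add_apply,
        LinearMap.smul_apply, smul_eq_mul]
      field_simp
      ring
    rw [hgram, Matrix.det_smul, Fintype.card_fin]
    have : (gram (A + μ⁻¹ • B) e).det = p.eval μ⁻¹ := by rw [hp, pgram_det_eval]
    rw [this, hpC]
    simp [smul_eq_mul]
  have hqC : q = Polynomial.C c * Polynomial.X ^ n := by
    apply Polynomial.eq_of_infinite_eval_eq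
    have hsub : {μ : ℂ | μ ≠ 0} ⊆ {μ : ℂ | q.eval μ = (Polynomial.C c * Polynomial.X ^ n).eval μ} := by
      intro μ hμ
      simp only [Set.mem_setOf_eq, Polynomial.eval_mul, Polynomial.eval_C, Polynomial.eval_pow,
        Polynomial.eval_X]
      rw [hqeval μ hμ]
      ring
    apply Set.Infinite.mono hsub
    have h2 := (Set.finite_singleton (0 : ℂ)).infinite_compl
    have h3 : ({0}ᶜ : Set ℂ) = {μ : ℂ | μ ≠ 0} := by ext μ; simp
    rwa [h3] at h2
  have hq0 : q.eval 0 = 0 := by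
    rw [hqC]
    simp only [Polynomial.eval_mul, Polynomial.eval_C, Polynomial.eval_pow, Polynomial.eval_X]
    rw [zero_pow (by omega : n ≠ 0)]
    ring
  apply hdetB
  have : q.eval 0 = (gram B e).det := by
    rw [hq, pgram_det_eval]
    have : B + (0 : ℂ) • A = B := by simp
    rw [this]
  rw [← this, hq0]

theorem main_aux : ∀ (N : ℕ) {V : Type u} [AddCommGroup V] [Module ℂ V]
    [FiniteDimensional ℂ V], finrank ℂ V ≤ N →
    ∀ (A B : V →ₗ[ℂ] V →ₗ[ℂ] ℂ), (∀ v, A v v = 0) → (∀ v, B v v = 0) →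
    ∀ (r : ℕ), rk B ≤ r → (∀ l : ℂ, rk (A + l • B) ≤ r) →
    (r = rk B ∨ ∃ l : ℂ, r = rk (A + l • B)) →
    ∃ L : Submodule ℂ V, (∀ u ∈ L, ∀ w ∈ L, A u w = 0) ∧ (∀ u ∈ L, ∀ w ∈ L, B u w = 0) ∧
      2 * (finrank ℂ V - finrank ℂ L) = r := by
  intro N
  induction N with
  | zero =>
    intro V _ _ _ hn A B hA hB r hrB hrA hrmax
    have hr0 : r = 0 := by
      rcases hrmax with h | ⟨l, h⟩
      · have := rk_add_ker B; omega
      · have := rk_add_ker (A + l • B); omega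
    refine ⟨⊥, ?_, ?_, ?_⟩
    · intro u hu w hw
      rw [Submodule.mem_bot] at hu
      simp [hu]
    · intro u hu w hw
      rw [Submodule.mem_bot] at hu
      simp [hu]
    · rw [finrank_bot]; omega
  | succ N ih =>
    intro V _ _ _ hn A B hA hB r hrB hrA hrmax
    rcases Nat.eq_zero_or_pos r with hr0 | hrpos
    · subst hr0
      have hA0 : A = 0 := by
        have h := hrA 0
        rw [show A + (0 : ℂ) • B = A by simp] at h
        exact rk_eq_zero_iff (Nat.le_zero.mp h)
      have hB0 : B = 0 := rk_eq_zero_iff (Nat.le_zero.mp hrB)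
      refine ⟨⊤, ?_, ?_, ?_⟩
      · intro u _ w _; rw [hA0]; rfl
      · intro u _ w _; rw [hB0]; rfl
      · rw [finrank_top]; omega
    have hrle : r ≤ finrank ℂ V := by
      rcases hrmax with h | ⟨l, h⟩
      · have := rk_add_ker B; omega
      · have := rk_add_ker (A + l • B); omega
    have hnpos : 0 < finrank ℂ V := by omega
    have hrev : Even r := by
      rcases hrmax with h | ⟨l, h⟩
      · rw [h]; exact even_rk_aux (finrank ℂ V) le_rfl B hB
      · rw [h]
        exact even_rk_aux (finrank ℂ V) le_rfl _ (fun w => by simp [hA w, hB w])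
    obtain ⟨v, hvne, hvcase⟩ := exists_degenerate A B hA hB hnpos
    by_cases hzero : A v = 0 ∧ B v = 0
    · -- CASE I : v is in the kernel of the whole pencil
      obtain ⟨hAv, hBv⟩ := hzero
      obtain ⟨W, hW⟩ := Submodule.exists_isCompl (Submodule.span ℂ {v})
      have hvW : v ∉ W := by
        intro hc
        have h2 : v ∈ Submodule.span ℂ {v} ⊓ W :=
          ⟨Submodule.mem_span_singleton_self v, hc⟩
        rw [hW.disjoint.eq_bot] at h2
        exact hvne (by simpa using h2)
      have hsup : W ⊔ Submodule.span ℂ {v} = ⊤ := by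
        rw [sup_comm]; exact hW.codisjoint.eq_top
      have hdimW : finrank ℂ W + 1 = finrank ℂ V := by
        have h2 := Submodule.finrank_add_eq_of_isCompl hW
        rw [finrank_span_singleton hvne] at h2
        omega
      have hresB : rk (res W B) = rk B := rk_res_compl (skew hB) hBv hsup hvW
      have hresA : ∀ l : ℂ, rk (res W (A + l • B)) = rk (A + l • B) := by
        intro l
        have hv0 : (A + l • B) v = 0 := by
          simp [LinearMap.add_apply, hAv, hBv]
        exact rk_res_compl (skew (fun w => by simp [hA w, hB w])) hv0 hsup hvW
      have hres_member : ∀ l : ℂ, res W A + l • res W B = res W (A + l • B) := by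
        intro l; rw [res_add, res_smul]
      obtain ⟨L', hAL', hBL', hdimL'⟩ :=
        ih (V := W) (by omega) (res W A) (res W B)
          (fun u => hA (u : V)) (fun u => hB (u : V)) r
          (by rw [hresB]; exact hrB)
          (by intro l; rw [hres_member l, hresA l]; exact hrA l)
          (by
            rcases hrmax with h | ⟨l, h⟩
            · exact Or.inl (h.trans hresB.symm)
            · exact Or.inr ⟨l, by rw [hres_member l, hresA l]; exact h⟩)
      set L : Submodule ℂ V := L'.map W.subtype ⊔ Submodule.span ℂ {v} with hL
      have hmemL : ∀ u ∈ L, ∃ u' ∈ L', ∃ a : ℂ, u = (u' : V) + a • v := by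
        intro u hu
        rw [hL] at hu
        obtain ⟨x, hx, s, hs, rfl⟩ := Submodule.mem_sup.mp hu
        obtain ⟨u', hu', rfl⟩ := Submodule.mem_map.mp hx
        obtain ⟨a, rfl⟩ := Submodule.mem_span_singleton.mp hs
        exact ⟨u', hu', a, rfl⟩
      have hvanish : ∀ (C : V →ₗ[ℂ] V →ₗ[ℂ] ℂ), (∀ x y, C x y = -C y x) → C v = 0 →
          (∀ u' ∈ L', ∀ w' ∈ L', C (u' : V) (w' : V) = 0) →
          ∀ u ∈ L, ∀ w ∈ L, C u w = 0 := by
        intro C hsk hCv hz u hu w hw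
        obtain ⟨u', hu', a, rfl⟩ := hmemL u hu
        obtain ⟨w', hw', b, rfl⟩ := hmemL w hw
        have h1 : C ((u' : V)) v = 0 := by rw [hsk]; simp [hCv]
        simp [map_add, map_smul, hz u' hu' w' hw', h1, hCv]
      have hLdim : finrank ℂ L = finrank ℂ L' + 1 := by
        have hd : finrank ℂ (L'.map W.subtype) = finrank ℂ L' :=
          Submodule.finrank_map_subtype_eq W L'
        have hdisj : (L'.map W.subtype) ⊓ Submodule.span ℂ {v} = ⊥ := by
          rw [eq_bot_iff]
          rintro x ⟨hx1, hx2⟩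
          have hxW : x ∈ W := by
            obtain ⟨u', -, rfl⟩ := Submodule.mem_map.mp hx1
            exact u'.2
          rw [← hW.disjoint.eq_bot]
          exact ⟨hx2, hxW⟩
        have h3 := Submodule.finrank_sup_add_finrank_inf_eq
          (L'.map W.subtype) (Submodule.span ℂ {v})
        rw [hdisj, finrank_span_singleton hvne, hd, finrank_bot] at h3
        rw [hL]
        omega
      refine ⟨L, hvanish A (skew hA) hAv (fun u' hu' w' hw' => hAL' u' hu' w' hw'),
        hvanish B (skew hB) hBv (fun u' hu' w' hw' => hBL' u' hu' w' hw'), ?_⟩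
      have hL'W : finrank ℂ L' ≤ finrank ℂ W := Submodule.finrank_le L'
      omega
    · -- CASE II : reduction to the hyperplane ker f
      obtain ⟨f, hfne, hfv, cB, hBf, hcol⟩ :
          ∃ f : V →ₗ[ℂ] ℂ, f ≠ 0 ∧ f v = 0 ∧
            ∃ cB : ℂ, B v = cB • f ∧ ∀ l : ℂ, ∃ c : ℂ, (A + l • B) v = c • f := by
        rcases hvcase with hBv | ⟨l₀, hl₀v⟩
        · have hAv : A v ≠ 0 := fun hc => hzero ⟨hc, hBv⟩
          refine ⟨A v, hAv, hA v, 0, by rw [hBv, zero_smul], ?_⟩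
          intro l
          refine ⟨1, ?_⟩
          simp [LinearMap.add_apply, hBv]
        · rcases eq_or_ne (B v) 0 with hBv | hBv
          · exfalso
            apply hzero
            have h2 : A v + l₀ • B v = 0 := by
              have := congrArg (fun g => g) hl₀v
              simpa [LinearMap.add_apply] using hl₀v
            rw [hBv, smul_zero, add_zero] at h2
            exact ⟨h2, hBv⟩
          · refine ⟨B v, hBv, hB v, 1, (one_smul ℂ (B v)).symm, ?_⟩
            intro l
            have h2 : A v = -l₀ • B v := by
              have h3 : A v + l₀ • B v = 0 := by
                simpa [LinearMap.add_apply] using hl₀v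
              rw [neg_smul, eq_neg_iff_add_eq_zero]
              exact h3
            refine ⟨l - l₀, ?_⟩
            rw [LinearMap.add_apply, h2, LinearMap.smul_apply]
            module
      obtain ⟨W, hWdef⟩ : ∃ W : Submodule ℂ V, W = ker f := ⟨_, rfl⟩
      have hdimW : finrank ℂ W + 1 = finrank ℂ V := by
        rw [hWdef]; exact finrank_ker_functional hfne
      have hAvBv : A v ≠ 0 ∨ B v ≠ 0 := by
        by_contra hc
        push_neg at hc
        exact hzero ⟨hc.1, hc.2⟩
      -- rank bound for B
      have hboundB : rk (res W B) + 2 ≤ r := by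
        rcases eq_or_ne (B v) 0 with hBv0 | hBv0
        · have hevenresB : Even (rk (res W B)) :=
            even_rk_aux (finrank ℂ W) le_rfl (res W B) (fun u => hB (u : V))
          have hevenB : Even (rk B) := even_rk_aux (finrank ℂ V) le_rfl B hB
          rcases eq_or_ne (rk B) r with hregB | hnregB
          · -- B is regular and kills v : use the key lemma
            have hmem' : ∀ t : ℂ, rk (B + t • A) ≤ r := by
              intro t
              rcases eq_or_ne t 0 with rfl | htne
              · rw [show B + (0 : ℂ) • A = B by simp]; exact hrB
              · rw [show B + t • A = t • (A + t⁻¹ • B) by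
                  rw [smul_add, smul_smul, mul_inv_cancel₀ htne]
                  ext u w
                  simp [add_comm], rk_smul htne]
                exact hrA t⁻¹
            have hAvc : ∃ c : ℂ, c ≠ 0 ∧ A v = c • f := by
              have h0 := hcol 0
              rw [show A + (0 : ℂ) • B = A by simp] at h0
              obtain ⟨c, hc⟩ := h0
              refine ⟨c, ?_, hc⟩
              intro hc0
              rw [hc0, zero_smul] at hc
              exact (hAvBv.resolve_right (fun h => h hBv0)) hc
            obtain ⟨c, hcne, hc⟩ := hAvc
            have hiso : ker B ≤ ker f := by
              intro x hx
              have hAvx : A v x = 0 :=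
                key_lemma hB hA hregB hmem' hBv0 (LinearMap.mem_ker.mp hx)
              rw [LinearMap.mem_ker]
              have := congrArg (fun g => g x) hc
              simp only [LinearMap.smul_apply, smul_eq_mul] at this
              rw [hAvx] at this
              exact (mul_eq_zero.mp this.symm).resolve_left hcne
            have h9 := rk_res_hyperplane_le hfne hiso
            rw [← hWdef] at h9
            obtain ⟨k1, hk1⟩ := hrev
            obtain ⟨k2, hk2⟩ := hevenresB
            omega
          · -- B is not regular
            have h2 := rk_res_le W B
            obtain ⟨k1, hk1⟩ := hrev
            obtain ⟨k2, hk2⟩ := hevenB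
            omega
        · -- B v ≠ 0 : exact drop
          have hcBne : cB ≠ 0 := by
            rintro rfl
            rw [zero_smul] at hBf
            exact hBv0 hBf
          have h9 := rk_res_hyperplane_exact (skew hB) hfne hcBne hBf hfv
          rw [← hWdef] at h9
          omega
      -- rank bound for the members A + l B
      have hboundA : ∀ l : ℂ, rk (res W (A + l • B)) + 2 ≤ r := by
        intro l
        set F := A + l • B with hF
        have hFalt : ∀ w, F w w = 0 := fun w => by simp [hF, hA w, hB w]
        obtain ⟨c, hc⟩ := hcol l
        rcases eq_or_ne c 0 with rfl | hcne
        · -- F kills v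
          rw [zero_smul] at hc
          have hevenresF : Even (rk (res W F)) :=
            even_rk_aux (finrank ℂ W) le_rfl (res W F) (fun u => hFalt (u : V))
          have hevenF : Even (rk F) := even_rk_aux (finrank ℂ V) le_rfl F hFalt
          rcases eq_or_ne (rk F) r with hregF | hnregF
          · have hmem' : ∀ t : ℂ, rk (F + t • B) ≤ r := by
              intro t
              rw [show F + t • B = A + (l + t) • B by rw [hF, add_smul]; abel]
              exact hrA (l + t)
            have hcBne : cB ≠ 0 := by
              rintro rfl
              rw [zero_smul] at hBf
              apply hzero
              have h3 : A v = 0 := by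
                have := congrArg (fun g => g) hc
                have h4 : A v + l • B v = 0 := by simpa [hF, LinearMap.add_apply] using hc
                rw [hBf, smul_zero, add_zero] at h4
                exact h4
              exact ⟨h3, hBf⟩
            have hiso : ker F ≤ ker f := by
              intro x hx
              have hBvx : B v x = 0 :=
                key_lemma hFalt hB hregF hmem' hc (LinearMap.mem_ker.mp hx)
              rw [LinearMap.mem_ker]
              have := congrArg (fun g => g x) hBf
              simp only [LinearMap.smul_apply, smul_eq_mul] at this
              rw [hBvx] at this
              exact (mul_eq_zero.mp this.symm).resolve_left hcBne
            have h9 := rk_res_hyperplane_le hfne hiso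
            rw [← hWdef] at h9
            obtain ⟨k1, hk1⟩ := hrev
            obtain ⟨k2, hk2⟩ := hevenresF
            omega
          · have h2 := rk_res_le W F
            have h3 := hrA l
            rw [← hF] at h3
            obtain ⟨k1, hk1⟩ := hrev
            obtain ⟨k2, hk2⟩ := hevenF
            omega
        · have h2 := rk_res_hyperplane_exact (skew hFalt) hfne hcne hc hfv
          rw [← hWdef] at h2
          have h3 := hrA l
          rw [← hF] at h3
          omega
      -- a member with exact rank r - 2
      obtain ⟨lreg, hlreg⟩ := exists_regular A B hA hB r hrB hrA hrmax
      obtain ⟨lg, hlg, hlgv⟩ := exists_good_lambda A B hA hB hrA hlreg hAvBv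
      obtain ⟨cg, hcg⟩ := hcol lg
      have hcgne : cg ≠ 0 := by
        rintro rfl
        rw [zero_smul] at hcg
        exact hlgv hcg
      have hlgalt : ∀ w, (A + lg • B) w w = 0 := fun w => by simp [hA w, hB w]
      have hexact := rk_res_hyperplane_exact (skew hlgalt) hfne hcgne hcg hfv
      rw [← hWdef] at hexact
      rw [hlg] at hexact
      have hres_member : ∀ l : ℂ, res W A + l • res W B = res W (A + l • B) := by
        intro l; rw [res_add, res_smul]
      obtain ⟨L', hAL', hBL', hdimL'⟩ :=
        ih (V := W) (by omega) (res W A) (res W B)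
          (fun u => hA (u : V)) (fun u => hB (u : V)) (r - 2)
          (by have := hboundB; omega)
          (by intro l; rw [hres_member l]; have := hboundA l; omega)
          (Or.inr ⟨lg, by rw [hres_member lg]; omega⟩)
      refine ⟨L'.map W.subtype, ?_, ?_, ?_⟩
      · rintro u hu w hw
        obtain ⟨u', hu', rfl⟩ := Submodule.mem_map.mp hu
        obtain ⟨w', hw', rfl⟩ := Submodule.mem_map.mp hw
        exact hAL' u' hu' w' hw'
      · rintro u hu w hw
        obtain ⟨u', hu', rfl⟩ := Submodule.mem_map.mp hu
        obtain ⟨w', hw', rfl⟩ := Submodule.mem_map.mp hw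
        exact hBL' u' hu' w' hw'
      · have hd : finrank ℂ (L'.map W.subtype) = finrank ℂ L' :=
          Submodule.finrank_map_subtype_eq W L'
        have hL'W : finrank ℂ L' ≤ finrank ℂ W := Submodule.finrank_le L'
        omega

end BiLag

/-- **Existence of bi-Lagrangian subspaces.**
For every pair of alternating bilinear forms `A`, `B` on a finite-dimensional complex
vector space `V` there exists a bi-Lagrangian subspace: a subspace `L` on which both
`A` and `B` vanish identically and such that `2 * (dim V - dim L)` equals the rank `r`
of the pencil `{A + λ • B}`. -/
theorem biLagrangian_exists
    {V : Type*} [AddCommGroup V] [Module ℂ V] [FiniteDimensional ℂ V]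
    (A B : V →ₗ[ℂ] V →ₗ[ℂ] ℂ)
    (hA : ∀ v, A v v = 0) (hB : ∀ v, B v v = 0)
    (r : ℕ)
    (hrB : finrank ℂ (LinearMap.range B) ≤ r)
    (hrA : ∀ l : ℂ, finrank ℂ (LinearMap.range (A + l • B)) ≤ r)
    (hrmax : r = finrank ℂ (LinearMap.range B) ∨
      ∃ l : ℂ, r = finrank ℂ (LinearMap.range (A + l • B))) :
    ∃ L : Submodule ℂ V,
      (∀ u ∈ L, ∀ v ∈ L, A u v = 0) ∧
      (∀ u ∈ L, ∀ v ∈ L, B u v = 0) ∧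
      2 * (finrank ℂ V - finrank ℂ L) = r := by
  exact BiLag.main_aux (Module.finrank ℂ V) le_rfl A B hA hB r hrB hrA hrmax
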